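/- If 2^n has exactly m nonzero decimal digits, where n is a positive integer, then 2^n < 10^(4^(m-1)). -/

import Mathlib

theorem stmt10 (n m : ℕ) (hn : 0 < n)
    (hm : ((Nat.digits 10 (2 ^ n)).filter (· ≠ 0)).length = m) :
    2 ^ n < 10 ^ (4 ^ (m - 1)) := by
  set N := 2 ^ n with hNdef
  have hN0 : N ≠ 0 := by positivity
  set l := Nat.digits 10 N with hldef
  have hd0 : N % 10 ≠ 0 := by
    intro h
    have h5 : (5:ℕ) ∣ N := dvd_trans (by norm_num) (Nat.dvd_of_mod_eq_zero h)
    have := Nat.Prime.dvd_of_dvd_pow (by norm_num : Nat.Prime 5) h5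
    norm_num at this
  have hlcons : l = N % 10 :: Nat.digits 10 (N / 10) :=
    Nat.digits_def' (by norm_num) (Nat.pos_of_ne_zero hN0)
  have hdig : ∀ x ∈ l, x < 10 := fun x hx => Nat.digits_lt_base (by norm_num) hx
  have key : ∀ e, e ≤ l.length →
      Nat.ofDigits 10 (l.take e) <
        10 ^ (4 ^ ((((l.take e).filter (· ≠ 0)).length) - 1)) := by
    intro e
    induction e with
    | zero => intro _; simp [Nat.ofDigits]
    | succ e ih =>
      intro he
      have hel : e < l.length := he
      have htake : l.take (e+1) = l.take e ++ [l[e]] := by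
        rw [List.take_succ, List.getElem?_eq_getElem hel]
        rfl
      have hlen : (l.take e).length = e := List.length_take_of_le hel.le
      have hS : Nat.ofDigits 10 (l.take (e+1)) =
          Nat.ofDigits 10 (l.take e) + 10 ^ e * l[e] := by
        rw [htake, Nat.ofDigits_append, hlen]
        simp [Nat.ofDigits_singleton]
      by_cases h0 : l[e] = 0
      · have : Nat.ofDigits 10 (l.take (e+1)) = Nat.ofDigits 10 (l.take e) := by
          rw [hS, h0]; ring
        rw [this, htake, List.filter_append]
        simp only [h0]
        simpa using ih hel.le
      · -- nonzero digit case
        set c := ((l.take e).filter (· ≠ 0)).length with hcdef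
        have hfilt : (((l.take (e+1)).filter (· ≠ 0)).length) = c + 1 := by
          rw [htake, List.filter_append, List.length_append, hcdef]
          congr 1
          simp [List.filter_singleton, h0]
        have hbound : e + 1 ≤ 4 ^ c := by
          rcases Nat.eq_zero_or_pos e with rfl | hepos
          · have := Nat.one_le_pow c 4 (by norm_num); omega
          · -- e ≥ 1
            have htk : l.take e = N % 10 :: (Nat.digits 10 (N/10)).take (e-1) := by
              obtain ⟨i, hi⟩ : ∃ i, e = i + 1 := ⟨e - 1, by omega⟩
              rw [hlcons, hi]
              simp
            have hc1 : 1 ≤ c := by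
              have hmem : N % 10 ∈ (l.take e).filter (· ≠ 0) := by
                apply List.mem_filter.mpr
                constructor
                · rw [htk]
                  exact List.mem_cons_self
                · simpa using hd0
              have := List.length_pos_iff.mpr (List.ne_nil_of_mem hmem)
              omega
            have hpos : 0 < Nat.ofDigits 10 (l.take e) := by
              rw [htk, Nat.ofDigits_cons]
              omega
            have heN : 10 ^ e ≤ N := by
              have h1 : 10 ^ l.length ≤ 10 * N :=
                Nat.base_pow_length_digits_le 10 N (by norm_num) hN0
              have h2 : 10 ^ (e + 1) ≤ 10 ^ l.length :=
                Nat.pow_le_pow_right (by norm_num) he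
              rw [pow_succ] at h2
              calc 10 ^ e ≤ 10 ^ l.length / 10 := by omega
                _ ≤ 10 * N / 10 := Nat.div_le_div_right h1
                _ = N := by omega
            have hen : e ≤ n := by
              by_contra hc
              push_neg at hc
              have : 10 ^ e ≤ 2 ^ n := heN
              have h2 : (2:ℕ) ^ n < 2 ^ e := Nat.pow_lt_pow_right one_lt_two hc
              have h3 : (2:ℕ) ^ e ≤ 10 ^ e := Nat.pow_le_pow_left (by norm_num) e
              omega
            have hdvd : 2 ^ e ∣ Nat.ofDigits 10 (l.take e) := by
              have hsplit : N = Nat.ofDigits 10 (l.take e) +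
                  10 ^ e * Nat.ofDigits 10 (l.drop e) := by
                conv_lhs => rw [← Nat.ofDigits_digits 10 N, ← hldef,
                  ← List.take_append_drop e l]
                rw [Nat.ofDigits_append, hlen]
              have hN : 2 ^ e ∣ N := by
                rw [hNdef]; exact pow_dvd_pow 2 hen
              have hT : (2:ℕ) ^ e ∣ 10 ^ e * Nat.ofDigits 10 (l.drop e) :=
                Dvd.dvd.mul_right (pow_dvd_pow_of_dvd (by norm_num) e) _
              rw [hsplit, add_comm] at hN
              exact (Nat.dvd_add_right hT).mp hN
            have hle : 2 ^ e ≤ Nat.ofDigits 10 (l.take e) := Nat.le_of_dvd hpos hdvd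
            have hlt : Nat.ofDigits 10 (l.take e) < 10 ^ (4 ^ (c - 1)) := ih hel.le
            have h16 : (10:ℕ) ^ (4 ^ (c - 1)) ≤ 2 ^ (4 * 4 ^ (c - 1)) := by
              rw [pow_mul]
              exact Nat.pow_le_pow_left (by norm_num) _
            have h4c : 4 * 4 ^ (c - 1) = 4 ^ c := by
              have hc : c - 1 + 1 = c := by omega
              conv_rhs => rw [← hc]
              rw [pow_succ]; ring
            have : (2:ℕ) ^ e < 2 ^ (4 ^ c) := by
              rw [← h4c]; omega
            have := Nat.pow_lt_pow_iff_right one_lt_two |>.mp this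
            omega
        -- finish: S(e+1) < 10^(e+1) ≤ 10^(4^c)
        have hSlt : Nat.ofDigits 10 (l.take (e+1)) < 10 ^ (e + 1) := by
          have h1 : Nat.ofDigits 10 (l.take e) < 10 ^ e := by
            have := Nat.ofDigits_lt_base_pow_length (b := 10) (l := l.take e)
              (by norm_num) (fun x hx => hdig x (List.mem_of_mem_take hx))
            rwa [hlen] at this
          have h2 : l[e] < 10 := hdig _ (List.getElem_mem hel)
          have h3 : 10 ^ e * l[e] ≤ 10 ^ e * 9 := Nat.mul_le_mul_left _ (by omega)
          rw [hS, pow_succ]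
          omega
        rw [hfilt]
        simp only [Nat.add_sub_cancel]
        calc Nat.ofDigits 10 (l.take (e+1)) < 10 ^ (e+1) := hSlt
          _ ≤ 10 ^ (4 ^ c) := Nat.pow_le_pow_right (by norm_num) hbound
  have := key l.length le_rfl
  rw [List.take_length, hldef] at this
  rw [hldef] at hm
  rw [Nat.ofDigits_digits] at this
  rwa [hm] at this
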